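/- Let n, B be positive integers with B ≤ n, write n = q·B + r by Euclidean division (q ≥ 1), and assume 2 ≤ r < B (so in particular B ≥ 3). Then there exists an allocation (n_1,…,n_B) of positive integers with ∑_{b=1}^B n_b = n such that min_b n_b = q (hence the allocation attains the optimal min-max value max_b n_b^{−1} = q^{−1}) but ∏_{b=1}^B n_b < q^{B−r}·(q+1)^r, i.e., the allocation is min-max optimal without being D-optimal. Hence min-max optimality does not imply D-optimality. -/

import Mathlib

open Finset

lemma key15 (q : ℕ) (hq : 1 ≤ q) : ∀ k : ℕ, q ^ (k + 1) * (q + (k + 2)) < (q + 1) ^ (k + 2) := by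
  intro k
  induction k with
  | zero => ring_nf; nlinarith
  | succ k ih =>
      have h1 : q ^ (k + 2) * (q + (k + 3)) ≤ (q + 1) * (q ^ (k + 1) * (q + (k + 2))) := by
        have : q * (q + (k + 3)) ≤ (q + 1) * (q + (k + 2)) := by nlinarith
        calc q ^ (k + 2) * (q + (k + 3)) = q ^ (k + 1) * (q * (q + (k + 3))) := by ring
          _ ≤ q ^ (k + 1) * ((q + 1) * (q + (k + 2))) :=
              Nat.mul_le_mul_left _ this
          _ = (q + 1) * (q ^ (k + 1) * (q + (k + 2))) := by ring
      have h2 : (q + 1) * (q ^ (k + 1) * (q + (k + 2))) < (q + 1) * (q + 1) ^ (k + 2) :=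
        Nat.mul_lt_mul_of_le_of_lt (le_refl _) ih (by omega)
      calc q ^ (k + 1 + 1) * (q + (k + 1 + 2)) = q ^ (k + 2) * (q + (k + 3)) := by ring_nf
        _ < (q + 1) * (q + 1) ^ (k + 2) := lt_of_le_of_lt h1 h2
        _ = (q + 1) ^ (k + 1 + 2) := by ring

/-- For `B ≤ n` with `n = q·B + r` by Euclidean division and `2 ≤ r < B`,
there exists an allocation of positive integers summing to `n` with minimum entry `q`
(hence attaining the optimal min-max value `max_b (n b)⁻¹ = q⁻¹`) whose product
`∏ b, n b` is strictly below the D-optimal value `q^(B-r) · (q+1)^r`: min-max optimality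
does not imply D-optimality. -/
theorem stmt15 (n B q r : ℕ) (hn : 0 < n) (hB : 0 < B) (hBn : B ≤ n)
    (hq : q = n / B) (hr : r = n % B) (hr2 : 2 ≤ r) :
    ∃ ν : Fin B → ℕ, (∀ b, 0 < ν b) ∧ ∑ b, ν b = n ∧
      (∀ b, q ≤ ν b) ∧ (∃ b, ν b = q) ∧
      ((univ.sup' (univ_nonempty_iff.mpr ⟨⟨0, hB⟩⟩) fun b => ((ν b : ℝ))⁻¹) = ((q : ℝ))⁻¹) ∧
      ∏ b, ν b < q ^ (B - r) * (q + 1) ^ r := by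
  have hrB : r < B := hr ▸ Nat.mod_lt n hB
  have hq1 : 1 ≤ q := by
    rw [hq]; exact (Nat.one_le_div_iff hB).mpr hBn
  have hBq : B * q + r = n := by rw [hq, hr]; exact Nat.div_add_mod n B
  have h1B : 1 < B := lt_of_le_of_lt (le_trans one_le_two hr2) hrB
  set a : Fin B := ⟨0, hB⟩ with ha
  refine ⟨fun b => q + (if b = a then r else 0), fun b => by positivity, ?_, fun b => Nat.le_add_right _ _, ?_, ?_, ?_⟩
  · rw [Finset.sum_add_distrib, Finset.sum_const, Finset.sum_ite_eq' univ a (fun _ => r),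
      if_pos (mem_univ a), card_univ, Fintype.card_fin, smul_eq_mul]
    exact hBq
  · refine ⟨⟨1, h1B⟩, ?_⟩
    have : (⟨1, h1B⟩ : Fin B) ≠ a := by simp [ha, Fin.ext_iff]
    simp [this]
  · apply le_antisymm
    · apply Finset.sup'_le
      intro b _
      have h1 : (0 : ℝ) < q := by exact_mod_cast hq1
      have h2 : (q : ℝ) ≤ (q + (if b = a then r else 0) : ℕ) := by
        exact_mod_cast Nat.le_add_right _ _
      exact inv_anti₀ h1 h2
    · have hne : (⟨1, h1B⟩ : Fin B) ≠ a := by simp [ha, Fin.ext_iff]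
      have := Finset.le_sup' (fun b => ((q + (if b = a then r else 0) : ℕ) : ℝ)⁻¹)
        (mem_univ (⟨1, h1B⟩ : Fin B))
      refine le_trans ?_ this
      simp [hne]
  · have hprod : ∏ b, (q + (if b = a then r else 0)) = (q + r) * q ^ (B - 1) := by
      rw [← Finset.mul_prod_erase univ _ (mem_univ a)]
      congr 1
      rw [Finset.prod_congr rfl (fun b hb => ?_), Finset.prod_const,
          Finset.card_erase_of_mem (mem_univ a), card_univ, Fintype.card_fin]
      · have : b ≠ a := (Finset.mem_erase.mp hb).1
        simp [this]
    rw [hprod]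
    have hkey : q ^ (r - 1) * (q + r) < (q + 1) ^ r := by
      obtain ⟨k, rfl⟩ : ∃ k, r = k + 2 := ⟨r - 2, by omega⟩
      simpa [Nat.add_sub_cancel] using key15 q hq1 k
    have hsplit : B - 1 = (B - r) + (r - 1) := by omega
    calc (q + r) * q ^ (B - 1) = q ^ (B - r) * (q ^ (r - 1) * (q + r)) := by
          rw [hsplit, pow_add]; ring
      _ < q ^ (B - r) * (q + 1) ^ r :=
          Nat.mul_lt_mul_of_le_of_lt (le_refl _) hkey (pow_pos hq1 _)
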